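/- Let a ∈ ℝ, h > 0, and let f be six times continuously differentiable on [a−h, a+h]. Define Q := f″(a) + (h²/12)·(f″(a+h) − 2f″(a) + f″(a−h))/h² − (f(a+h) − 2f(a) + f(a−h))/h². Then |Q| ≤ (7/720)·(max_{[a−h,a+h]} |f⁽⁶⁾|)·h⁴. -/

import Mathlib

open Set Nat

lemma aux_mono {f : ℝ → ℝ} {s t : Set ℝ} {n m : ℕ} (hst : s ⊆ t) (hs : UniqueDiffOn ℝ s)
    (ht : UniqueDiffOn ℝ t) (hf : ContDiffOn ℝ n f t) (hmn : m ≤ n) {x : ℝ} (hx : x ∈ s) :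
    iteratedDerivWithin m f s x = iteratedDerivWithin m f t x := by
  have H := ((hf.ftaylorSeriesWithin ht).mono hst).eq_iteratedFDerivWithin_of_uniqueDiffOn
    (by exact_mod_cast hmn) hs hx
  simp only [iteratedDerivWithin_eq_iteratedFDerivWithin, ← H]
  rfl

lemma iter_iter {f : ℝ → ℝ} {s : Set ℝ} (hs : UniqueDiffOn ℝ s) (k m : ℕ) {x : ℝ} (hx : x ∈ s) :
    iteratedDerivWithin k (iteratedDerivWithin m f s) s x = iteratedDerivWithin (k + m) f s x := by
  calc iteratedDerivWithin k (iteratedDerivWithin m f s) s x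
      = iteratedDerivWithin k ((fun g : ℝ → ℝ => derivWithin g s)^[m] f) s x :=
        iteratedDerivWithin_congr (fun y hy => iteratedDerivWithin_eq_iterate) hx
    _ = (fun g : ℝ → ℝ => derivWithin g s)^[k] ((fun g : ℝ → ℝ => derivWithin g s)^[m] f) x :=
        iteratedDerivWithin_eq_iterate
    _ = (fun g : ℝ → ℝ => derivWithin g s)^[k + m] f x := by rw [Function.iterate_add_apply]
    _ = iteratedDerivWithin (k + m) f s x := iteratedDerivWithin_eq_iterate.symm

theorem taylor_left {f : ℝ → ℝ} {x x₀ : ℝ} {n : ℕ} (hx : x < x₀)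
    (hf : ContDiffOn ℝ n f (Set.Icc x x₀))
    (hf' : DifferentiableOn ℝ (iteratedDerivWithin n f (Set.Icc x x₀)) (Set.Ioo x x₀)) :
    ∃ x' ∈ Set.Ioo x x₀, f x - taylorWithinEval f n (Set.Icc x x₀) x₀ x =
      iteratedDerivWithin (n + 1) f (Set.Icc x x₀) x' * (x - x₀) ^ (n + 1) / (n + 1)! := by
  have gcont : ContinuousOn (fun t : ℝ => (x - t) ^ (n + 1)) (Set.Icc x x₀) := by fun_prop
  rcases exists_ratio_hasDerivAt_eq_ratio_slope
      (fun t => taylorWithinEval f n (Set.Icc x x₀) t x)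
      (fun t => ((n ! : ℝ)⁻¹ * (x - t) ^ n) • iteratedDerivWithin (n + 1) f (Set.Icc x x₀) t) hx
      (continuousOn_taylorWithinEval (uniqueDiffOn_Icc hx) hf)
      (fun y hy => taylorWithinEval_hasDerivAt_Ioo x hx hy hf hf')
      (fun t => (x - t) ^ (n + 1)) (fun t => -(↑n + 1) * (x - t) ^ n) gcont
      (fun y _ => monomial_has_deriv_aux y x _) with ⟨y, hy, h⟩
  use y, hy
  have hA : (x - y) ^ n ≠ 0 := pow_ne_zero _ (sub_ne_zero.mpr hy.1.ne)
  have hn' : (n ! : ℝ) ≠ 0 := by exact_mod_cast n.factorial_ne_zero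
  simp only [taylorWithinEval_self, smul_eq_mul, sub_self] at h
  have h3 : ((x - x₀) ^ (n + 1) * (n ! : ℝ)⁻¹ *
        iteratedDerivWithin (n + 1) f (Set.Icc x x₀) y) * (x - y) ^ n
      = ((taylorWithinEval f n (Set.Icc x x₀) x₀ x - f x) * (-(↑n + 1))) * (x - y) ^ n := by
    rw [zero_pow (Nat.succ_ne_zero n)] at h
    linear_combination h
  have h4 := mul_right_cancel₀ hA h3
  field_simp at h4 ⊢
  rw [Nat.factorial_succ]
  push_cast
  linear_combination -h4

theorem taylor_right {f : ℝ → ℝ} {x x₀ : ℝ} {n : ℕ} (hx : x₀ < x)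
    (hf : ContDiffOn ℝ n f (Set.Icc x₀ x))
    (hf' : DifferentiableOn ℝ (iteratedDerivWithin n f (Set.Icc x₀ x)) (Set.Ioo x₀ x)) :
    ∃ x' ∈ Set.Ioo x₀ x, f x - taylorWithinEval f n (Set.Icc x₀ x) x₀ x =
      iteratedDerivWithin (n + 1) f (Set.Icc x₀ x) x' * (x - x₀) ^ (n + 1) / (n + 1)! := by
  have := taylor_mean_remainder_lagrange (n := n) hx.ne (by rwa [uIcc_of_le hx.le])
    (by rwa [uIcc_of_le hx.le, uIoo_of_le hx.le])
  rwa [uIcc_of_le hx.le, uIoo_of_le hx.le] at this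

set_option maxHeartbeats 1000000 in
/-- Fourth-order truncation error of the compact approximation of the second derivative:
for `f` six times continuously differentiable on `[a-h, a+h]` with `|f⁽⁶⁾| ≤ K` there,
the quantity `Q := f''(a) + (h²/12)·δₓ²f''(a) - δₓ²f(a)` satisfies
`|Q| ≤ (7/720)·K·h⁴`. -/
theorem stmt_13 (a h : ℝ) (hh : 0 < h) (f : ℝ → ℝ)
    (hf : ContDiffOn ℝ 6 f (Set.Icc (a - h) (a + h)))
    (K : ℝ)
    (hK : ∀ x ∈ Set.Icc (a - h) (a + h),
      |iteratedDerivWithin 6 f (Set.Icc (a - h) (a + h)) x| ≤ K) :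
    |iteratedDerivWithin 2 f (Set.Icc (a - h) (a + h)) a
        + h ^ 2 / 12 *
          ((iteratedDerivWithin 2 f (Set.Icc (a - h) (a + h)) (a + h)
              - 2 * iteratedDerivWithin 2 f (Set.Icc (a - h) (a + h)) a
              + iteratedDerivWithin 2 f (Set.Icc (a - h) (a + h)) (a - h)) / h ^ 2)
        - (f (a + h) - 2 * f a + f (a - h)) / h ^ 2|
      ≤ 7 / 720 * K * h ^ 4 := by
  have hlt : a - h < a + h := by linarith
  have haR : a < a + h := by linarith
  have haL : a - h < a := by linarith
  have hus : UniqueDiffOn ℝ (Icc (a - h) (a + h)) := uniqueDiffOn_Icc hlt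
  have husR : UniqueDiffOn ℝ (Icc a (a + h)) := uniqueDiffOn_Icc haR
  have husL : UniqueDiffOn ℝ (Icc (a - h) a) := uniqueDiffOn_Icc haL
  have subR : Icc a (a + h) ⊆ Icc (a - h) (a + h) := Icc_subset_Icc (by linarith) le_rfl
  have subL : Icc (a - h) a ⊆ Icc (a - h) (a + h) := Icc_subset_Icc le_rfl (by linarith)
  have hf6 : ContDiffOn ℝ (6 : ℕ) f (Icc (a - h) (a + h)) := by exact_mod_cast hf
  set ph := iteratedDerivWithin 2 f (Icc (a - h) (a + h)) with hphdef
  -- ph is C⁴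
  have hph : ContDiffOn ℝ (4 : ℕ) ph (Icc (a - h) (a + h)) := by
    rw [contDiffOn_nat_iff_continuousOn_differentiableOn_deriv hus]
    have hf' := (contDiffOn_nat_iff_continuousOn_differentiableOn_deriv hus).mp hf6
    constructor
    · intro m hm
      exact (hf'.1 (m + 2) (by omega)).congr (fun y hy => iter_iter hus m 2 hy)
    · intro m hm
      exact (hf'.2 (m + 2) (by omega)).congr (fun y hy => iter_iter hus m 2 hy)
  -- transfer lemmas
  have ER : ∀ m : ℕ, m ≤ 6 → ∀ x ∈ Icc a (a + h),
      iteratedDerivWithin m f (Icc a (a + h)) x = iteratedDerivWithin m f (Icc (a - h) (a + h)) x :=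
    fun m hm x hx => aux_mono subR husR hus hf6 hm hx
  have EL : ∀ m : ℕ, m ≤ 6 → ∀ x ∈ Icc (a - h) a,
      iteratedDerivWithin m f (Icc (a - h) a) x = iteratedDerivWithin m f (Icc (a - h) (a + h)) x :=
    fun m hm x hx => aux_mono subL husL hus hf6 hm hx
  have ERph : ∀ m : ℕ, m ≤ 4 → ∀ x ∈ Icc a (a + h),
      iteratedDerivWithin m ph (Icc a (a + h)) x
        = iteratedDerivWithin (m + 2) f (Icc (a - h) (a + h)) x :=
    fun m hm x hx => (aux_mono subR husR hus hph hm hx).trans (iter_iter hus m 2 (subR hx))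
  have ELph : ∀ m : ℕ, m ≤ 4 → ∀ x ∈ Icc (a - h) a,
      iteratedDerivWithin m ph (Icc (a - h) a) x
        = iteratedDerivWithin (m + 2) f (Icc (a - h) (a + h)) x :=
    fun m hm x hx => (aux_mono subL husL hus hph hm hx).trans (iter_iter hus m 2 (subL hx))
  have haa : a ∈ Icc a (a + h) := ⟨le_rfl, by linarith⟩
  have haa' : a ∈ Icc (a - h) a := ⟨by linarith, le_rfl⟩
  -- Taylor for f on the right
  obtain ⟨ξ₁, hξ₁, H1⟩ := taylor_right (n := 5) haR
    ((hf6.mono subR).of_le (by exact_mod_cast (by norm_num : (5:ℕ) ≤ 6)))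
    (((hf6.mono subR).differentiableOn_iteratedDerivWithin
      (by exact_mod_cast (by norm_num : (5:ℕ) < 6)) husR).mono Ioo_subset_Icc_self)
  -- Taylor for f on the left
  obtain ⟨ξ₂, hξ₂, H2⟩ := taylor_left (n := 5) haL
    ((hf6.mono subL).of_le (by exact_mod_cast (by norm_num : (5:ℕ) ≤ 6)))
    (((hf6.mono subL).differentiableOn_iteratedDerivWithin
      (by exact_mod_cast (by norm_num : (5:ℕ) < 6)) husL).mono Ioo_subset_Icc_self)
  -- Taylor for ph on the right
  obtain ⟨η₁, hη₁, H3⟩ := taylor_right (n := 3) haR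
    ((hph.mono subR).of_le (by exact_mod_cast (by norm_num : (3:ℕ) ≤ 4)))
    (((hph.mono subR).differentiableOn_iteratedDerivWithin
      (by exact_mod_cast (by norm_num : (3:ℕ) < 4)) husR).mono Ioo_subset_Icc_self)
  -- Taylor for ph on the left
  obtain ⟨η₂, hη₂, H4⟩ := taylor_left (n := 3) haL
    ((hph.mono subL).of_le (by exact_mod_cast (by norm_num : (3:ℕ) ≤ 4)))
    (((hph.mono subL).differentiableOn_iteratedDerivWithin
      (by exact_mod_cast (by norm_num : (3:ℕ) < 4)) husL).mono Ioo_subset_Icc_self)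
  -- rewrite all iterated derivatives to the big interval
  simp only [taylor_within_apply, Finset.sum_range_succ, Finset.sum_range_zero,
    smul_eq_mul, zero_add] at H1 H2 H3 H4
  rw [ER 0 (by omega) a haa, ER 1 (by omega) a haa, ER 2 (by omega) a haa,
    ER 3 (by omega) a haa, ER 4 (by omega) a haa, ER 5 (by omega) a haa,
    ER 6 (by omega) ξ₁ (Ioo_subset_Icc_self hξ₁)] at H1
  rw [EL 0 (by omega) a haa', EL 1 (by omega) a haa', EL 2 (by omega) a haa',
    EL 3 (by omega) a haa', EL 4 (by omega) a haa', EL 5 (by omega) a haa',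
    EL 6 (by omega) ξ₂ (Ioo_subset_Icc_self hξ₂)] at H2
  rw [ERph 0 (by omega) a haa, ERph 1 (by omega) a haa, ERph 2 (by omega) a haa,
    ERph 3 (by omega) a haa, ERph 4 (by omega) η₁ (Ioo_subset_Icc_self hη₁)] at H3
  rw [ELph 0 (by omega) a haa', ELph 1 (by omega) a haa', ELph 2 (by omega) a haa',
    ELph 3 (by omega) a haa', ELph 4 (by omega) η₂ (Ioo_subset_Icc_self hη₂)] at H4
  norm_num [Nat.factorial] at H1 H2 H3 H4
  set w₁ := iteratedDerivWithin 6 f (Icc (a - h) (a + h)) ξ₁ with hw₁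
  set w₂ := iteratedDerivWithin 6 f (Icc (a - h) (a + h)) ξ₂ with hw₂
  set u₁ := iteratedDerivWithin 6 f (Icc (a - h) (a + h)) η₁ with hu₁
  set u₂ := iteratedDerivWithin 6 f (Icc (a - h) (a + h)) η₂ with hu₂
  have h2ne : (h : ℝ) ^ 2 ≠ 0 := pow_ne_zero _ hh.ne'
  have key : ph a + h ^ 2 / 12 * ((ph (a + h) - 2 * ph a + ph (a - h)) / h ^ 2)
      - (f (a + h) - 2 * f a + f (a - h)) / h ^ 2
      = h ^ 4 / 288 * (u₁ + u₂) - h ^ 4 / 720 * (w₁ + w₂) := by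
    have key0 : ph a * h ^ 2 + h ^ 2 / 12 * (ph (a + h) - 2 * ph a + ph (a - h))
        - (f (a + h) - 2 * f a + f (a - h))
        = (h ^ 4 / 288 * (u₁ + u₂) - h ^ 4 / 720 * (w₁ + w₂)) * h ^ 2 := by
      linear_combination (h ^ 2 / 12) * H3 + (h ^ 2 / 12) * H4 - H1 - H2
    have e : ph a + h ^ 2 / 12 * ((ph (a + h) - 2 * ph a + ph (a - h)) / h ^ 2)
        - (f (a + h) - 2 * f a + f (a - h)) / h ^ 2
        = (ph a * h ^ 2 + h ^ 2 / 12 * (ph (a + h) - 2 * ph a + ph (a - h))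
            - (f (a + h) - 2 * f a + f (a - h))) / h ^ 2 := by
      field_simp
    rw [e, key0, mul_div_cancel_right₀ _ h2ne]
  rw [key]
  have hK4 : ∀ x ∈ Icc (a - h) (a + h), -K ≤ iteratedDerivWithin 6 f (Icc (a - h) (a + h)) x ∧
      iteratedDerivWithin 6 f (Icc (a - h) (a + h)) x ≤ K := fun x hx => abs_le.mp (hK x hx)
  obtain ⟨b1, b2⟩ := hK4 ξ₁ (subR (Ioo_subset_Icc_self hξ₁))
  obtain ⟨b3, b4⟩ := hK4 ξ₂ (subL (Ioo_subset_Icc_self hξ₂))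
  obtain ⟨b5, b6⟩ := hK4 η₁ (subR (Ioo_subset_Icc_self hη₁))
  obtain ⟨b7, b8⟩ := hK4 η₂ (subL (Ioo_subset_Icc_self hη₂))
  have h4pos : (0 : ℝ) < h ^ 4 := pow_pos hh 4
  rw [abs_le]
  constructor <;> linarith [mul_le_mul_of_nonneg_left b2 h4pos.le,
    mul_le_mul_of_nonneg_left b4 h4pos.le, mul_le_mul_of_nonneg_left b6 h4pos.le,
    mul_le_mul_of_nonneg_left b8 h4pos.le, mul_le_mul_of_nonneg_left b1 h4pos.le,
    mul_le_mul_of_nonneg_left b3 h4pos.le, mul_le_mul_of_nonneg_left b5 h4pos.le,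
    mul_le_mul_of_nonneg_left b7 h4pos.le]
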